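/- Let f = 1/√5, h = 1/(2√5), k = (5−√5)/10, r = (5−√5)/20, and let X* be the real symmetric 7×7 matrix (indexed 0,1,…,6) with X*_{00} = 1; X*_{0i} = X*_{ii} given by (f, f, f, h, f, h) for i = 1,…,6; off-diagonal entries X*_{12} = X*_{15} = X*_{23} = k, X*_{34} = X*_{36} = X*_{45} = X*_{56} = r; and X*_{ij} = 0 for all remaining pairs of distinct i, j ∈ {1,…,6}, namely {1,3},{1,4},{1,6},{2,4},{2,5},{2,6},{3,5},{4,6}. Then X* is positive semidefinite, it is primal feasible for the Lovász theta SDP of the graph G₆, and its objective value is ∑_{i=1}^6 X*_{ii} = √5. -/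

import Mathlib

/-- Adjacency in the graph `G₆` on the vertex set `{1, …, 6}` with edge set
`{ {1,3}, {1,4}, {1,6}, {2,4}, {2,5}, {2,6}, {3,5}, {4,6} }`. -/
def g6Adj (i j : ℕ) : Prop :=
  (i, j) ∈ [(1, 3), (1, 4), (1, 6), (2, 4), (2, 5), (2, 6), (3, 5), (4, 6)] ∨
    (j, i) ∈ [(1, 3), (1, 4), (1, 6), (2, 4), (2, 5), (2, 6), (3, 5), (4, 6)]

/-- The explicit primal optimal solution `X*` of the Lovász theta SDP of `G₆`, with
`f = 1/√5`, `h = 1/(2√5)`, `k = (5 - √5)/10` and `r = (5 - √5)/20`. -/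
noncomputable def g6Xstar : Matrix (Fin 7) (Fin 7) ℝ :=
  let f : ℝ := 1 / Real.sqrt 5
  let h : ℝ := 1 / (2 * Real.sqrt 5)
  let k : ℝ := (5 - Real.sqrt 5) / 10
  let r : ℝ := (5 - Real.sqrt 5) / 20
  !![1, f, f, f, h, f, h;
     f, f, k, 0, 0, k, 0;
     f, k, f, k, 0, 0, 0;
     f, 0, k, f, r, 0, r;
     h, 0, 0, r, h, r, 0;
     f, k, 0, 0, r, f, r;
     h, 0, 0, r, 0, r, h]

lemma sqrt5_sq : Real.sqrt 5 ^ 2 = 5 := Real.sq_sqrt (by norm_num)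

lemma sqrt5_pos : (0:ℝ) < Real.sqrt 5 := Real.sqrt_pos.mpr (by norm_num)

lemma sqrt5_ge_two : (2:ℝ) ≤ Real.sqrt 5 := by
  nlinarith [sqrt5_sq, sqrt5_pos]

lemma finIdx1 : Fin.succ (0 : Fin 6) = 1 := rfl
lemma finIdx2 : Fin.succ (Fin.succ (0 : Fin 5)) = 2 := rfl
lemma finIdx3 : Fin.succ (Fin.succ (Fin.succ (0 : Fin 4))) = 3 := rfl
lemma finIdx4 : Fin.succ (Fin.succ (Fin.succ (Fin.succ (0 : Fin 3)))) = 4 := rfl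
lemma finIdx5 : Fin.succ (Fin.succ (Fin.succ (Fin.succ (Fin.succ (0 : Fin 2))))) = 5 := rfl
lemma finIdx6 : Fin.succ (Fin.succ (Fin.succ (Fin.succ (Fin.succ (Fin.succ (0 : Fin 1)))))) = 6 := rfl

lemma cv0 {α : Type*} (a b c d e f g : α) : ![a,b,c,d,e,f,g] 0 = a := rfl
lemma cv1 {α : Type*} (a b c d e f g : α) : ![a,b,c,d,e,f,g] 1 = b := rfl
lemma cv2 {α : Type*} (a b c d e f g : α) : ![a,b,c,d,e,f,g] 2 = c := rfl
lemma cv3 {α : Type*} (a b c d e f g : α) : ![a,b,c,d,e,f,g] 3 = d := rfl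
lemma cv4 {α : Type*} (a b c d e f g : α) : ![a,b,c,d,e,f,g] 4 = e := rfl
lemma cv5 {α : Type*} (a b c d e f g : α) : ![a,b,c,d,e,f,g] 5 = f := rfl
lemma cv6 {α : Type*} (a b c d e f g : α) : ![a,b,c,d,e,f,g] 6 = g := rfl

lemma inv_sqrt5 : (1:ℝ)/Real.sqrt 5 = Real.sqrt 5/5 := by
  have h := sqrt5_sq
  rw [div_eq_div_iff (by positivity) (by norm_num)]
  nlinarith [h]

lemma inv_2sqrt5 : (1:ℝ)/(2*Real.sqrt 5) = Real.sqrt 5/10 := by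
  have h := sqrt5_sq
  rw [div_eq_div_iff (by positivity) (by norm_num)]
  nlinarith [h]

lemma g6Xstar_key (x : Fin 7 → ℝ) : dotProduct x (g6Xstar.mulVec x) =
      (x 0 + Real.sqrt 5/5*(x 1 + x 2 + x 3 + x 5) + Real.sqrt 5/10*(x 4 + x 6))^2
      + (Real.sqrt 5-1)/5 * (x 1 + (Real.sqrt 5-1)/4*(x 2 + x 5) - (1+Real.sqrt 5)/4*x 3 - (1+Real.sqrt 5)/8*(x 4 + x 6))^2
      + Real.sqrt 5/10 * (x 2 + (Real.sqrt 5-1)/2*x 3 + (1-Real.sqrt 5)/4*(x 4 + x 6) - x 5)^2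
      + Real.sqrt 5/20 * (x 4 - x 6)^2 := by
  simp only [g6Xstar, dotProduct, Matrix.mulVec, Fin.sum_univ_succ, Fin.sum_univ_zero,
    Matrix.of_apply, Matrix.cons_val_zero, Matrix.cons_val_succ, add_zero,
    finIdx1, finIdx2, finIdx3, finIdx4, finIdx5, finIdx6,
    cv0, cv1, cv2, cv3, cv4, cv5, cv6, inv_sqrt5, inv_2sqrt5]
  linear_combination ((-1/1600 : ℝ) * x 6 * x 6 + (-41/400 : ℝ) * x 5 * x 6 + (-1/400 : ℝ) * x 5 * x 5 + (-1/800 : ℝ) * x 4 * x 6 + (-41/400 : ℝ) * x 4 * x 5 + (-1/1600 : ℝ) * x 4 * x 4 + (-41/400 : ℝ) * x 3 * x 6 + (-1/200 : ℝ) * x 3 * x 5 + (-41/400 : ℝ) * x 3 * x 4 + (-1/400 : ℝ) * x 3 * x 3 + (-1/400 : ℝ) * x 2 * x 6 + (-1/200 : ℝ) * x 2 * x 5 + (-1/400 : ℝ) * x 2 * x 4 + (-41/200 : ℝ) * x 2 * x 3 + (-1/400 : ℝ) * x 2 * x 2 + (1/100 : ℝ) * x 1 * x 6 + (-9/50 :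 ℝ) * x 1 * x 5 + (1/100 : ℝ) * x 1 * x 4 + (1/50 : ℝ) * x 1 * x 3 + (-9/50 : ℝ) * x 1 * x 2 + (-1/25 : ℝ) * x 1 * x 1 + (-3/320 : ℝ) * Real.sqrt 5 * x 6 * x 6 + (1/80 : ℝ) * Real.sqrt 5 * x 5 * x 6 + (-1/80 : ℝ) * Real.sqrt 5 * x 5 * x 5 + (-3/160 : ℝ) * Real.sqrt 5 * x 4 * x 6 + (1/80 : ℝ) * Real.sqrt 5 * x 4 * x 5 + (-3/320 : ℝ) * Real.sqrt 5 * x 4 * x 4 + (1/80 : ℝ) * Real.sqrt 5 * x 3 * x 6 + (1/40 : ℝ) * Real.sqrt 5 * x 3 * x 5 + (1/80 : ℝ) * Real.sqrt 5 * x 3 * x 4 + (-3/80 : ℝ) * Real.sqrt 5 * x 3 * x 3 + (1/80 : ℝ) * Real.sqrt 5 * x 2 * x 6 + (-1/40 : ℝ) * Real.sqrt 5 * x 2 * x 5 + (1/80 : ℝ) * Real.sqrt 5 * x 2 * x 4 + (1/40 : ℝ) * Real.sqrt 5 * x 2 * x 3 + (-1/80 : ℝ) * Real.sqrt 5 * x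 2 * x 2) * sqrt5_sq

lemma g6Xstar_quadform (x : Fin 7 → ℝ) : 0 ≤ dotProduct x (g6Xstar.mulVec x) := by
  rw [g6Xstar_key]
  have hs2 := sqrt5_ge_two
  have h1 : (0:ℝ) ≤ (Real.sqrt 5 - 1)/5 := by linarith
  have h2 : (0:ℝ) ≤ Real.sqrt 5/10 := by linarith
  have h3 : (0:ℝ) ≤ Real.sqrt 5/20 := by linarith
  positivity


lemma cvm0 {α : Type*} (a b c d e f g : α) (h : 0 < 7) : ![a,b,c,d,e,f,g] ⟨0,h⟩ = a := rfl
lemma cvm1 {α : Type*} (a b c d e f g : α) (h : 1 < 7) : ![a,b,c,d,e,f,g] ⟨1,h⟩ = b := rfl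
lemma cvm2 {α : Type*} (a b c d e f g : α) (h : 2 < 7) : ![a,b,c,d,e,f,g] ⟨2,h⟩ = c := rfl
lemma cvm3 {α : Type*} (a b c d e f g : α) (h : 3 < 7) : ![a,b,c,d,e,f,g] ⟨3,h⟩ = d := rfl
lemma cvm4 {α : Type*} (a b c d e f g : α) (h : 4 < 7) : ![a,b,c,d,e,f,g] ⟨4,h⟩ = e := rfl
lemma cvm5 {α : Type*} (a b c d e f g : α) (h : 5 < 7) : ![a,b,c,d,e,f,g] ⟨5,h⟩ = f := rfl
lemma cvm6 {α : Type*} (a b c d e f g : α) (h : 6 < 7) : ![a,b,c,d,e,f,g] ⟨6,h⟩ = g := rfl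

/-- `X*` is positive semidefinite, primal feasible for the Lovász theta SDP of `G₆`
(`X* 0 0 = 1`, `X* i i = X* 0 i` for `i ∈ {1, …, 6}`, `X* i j = 0` on edges of `G₆`), and its
objective value `∑_{i=1}^6 X*_{ii}` equals `√5`. -/
theorem g6Xstar_primal_feasible_objective :
    g6Xstar.PosSemidef ∧
    g6Xstar 0 0 = 1 ∧
    (∀ i : Fin 7, i.val ≠ 0 → g6Xstar i i = g6Xstar 0 i) ∧
    (∀ i j : Fin 7, i.val ≠ 0 → j.val ≠ 0 → g6Adj i.val j.val → g6Xstar i j = 0) ∧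
    ∑ i : Fin 6, g6Xstar i.succ i.succ = Real.sqrt 5 := by
  refine ⟨Matrix.PosSemidef.of_dotProduct_mulVec_nonneg ?_ (fun x => by rw [star_trivial]; exact g6Xstar_quadform x), ?_, ?_, ?_, ?_⟩
  · show g6Xstar.conjTranspose = g6Xstar
    ext i j
    fin_cases i <;> fin_cases j <;> rfl
  · simp only [g6Xstar, Matrix.of_apply, cv0]
  · intro i hi
    fin_cases i
    · exact absurd rfl hi
    all_goals simp only [g6Xstar, Matrix.of_apply, cv0, cv1, cv2, cv3, cv4, cv5, cv6,
      cvm0, cvm1, cvm2, cvm3, cvm4, cvm5, cvm6]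
  · intro i j hi hj hadj
    fin_cases i <;> fin_cases j <;>
      first
        | exact absurd rfl hi
        | exact absurd rfl hj
        | (exfalso; simp only [g6Adj, List.mem_cons, List.not_mem_nil, or_false,
            Prod.mk.injEq] at hadj; omega)
        | simp only [g6Xstar, Matrix.of_apply, cvm0, cvm1, cvm2, cvm3, cvm4, cvm5, cvm6]
  · simp only [Fin.sum_univ_succ, Fin.sum_univ_zero, g6Xstar, Matrix.of_apply]
    norm_num [Fin.succ]
    rw [show (Real.sqrt 5)⁻¹ = Real.sqrt 5/5 by rw [← one_div]; exact inv_sqrt5]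
    ring
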